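/- Let M : ℕ → ℝ be a weight sequence in the class LC, with m_p := M_p/p!. Then the following are equivalent: (i) there exist A ≥ 1 and a positive integer C such that (m_p)^{1/p} ≤ A·(m_q)^{1/q} for all p ≥ 1 and all q ≥ C·p; (ii) there exist B ≥ 1 and a positive integer C such that (m_p)^{1/p} ≤ B·(l^C_q)^{1/q} for all 1 ≤ p ≤ q, where l^C_p := (M_{C·p})^{1/C}/p!. -/

import Mathlib

open Filter Real Asymptotics

/-- The associated weight function of a weight sequence `M`. -/
noncomputable def omegaM (M : ℕ → ℝ) (t : ℝ) : ℝ :=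
  if t = 0 then 0 else ⨆ p : ℕ, Real.log (t ^ p / M p)

/-- The class `LC`: positive, normalized, log-convex weight sequences whose
`p`-th roots tend to infinity. -/
def IsLC (M : ℕ → ℝ) : Prop :=
  (∀ p, 0 < M p) ∧ M 0 = 1 ∧ M 0 ≤ M 1 ∧
  (∀ p : ℕ, 1 ≤ p → (M p) ^ 2 ≤ M (p - 1) * M (p + 1)) ∧
  Filter.Tendsto (fun p : ℕ => (M p) ^ (1 / (p : ℝ))) Filter.atTop Filter.atTop

/-- The quotient sequence `μ_0 = 1`, `μ_p = M_p / M_{p-1}`. -/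
noncomputable def mu (M : ℕ → ℝ) (p : ℕ) : ℝ :=
  if p = 0 then 1 else M p / M (p - 1)

/-- Moderate growth `(mg)`. -/
def HasMG (M : ℕ → ℝ) : Prop :=
  ∃ C : ℝ, 1 ≤ C ∧ ∀ p q : ℕ, M (p + q) ≤ C ^ (p + q) * M p * M q

/-- `m_p := M_p / p!`. -/
noncomputable def mseq (M : ℕ → ℝ) (p : ℕ) : ℝ := M p / (Nat.factorial p)

/-- Young conjugate of `x ↦ ω_M(eˣ)`. -/
noncomputable def phiStar (M : ℕ → ℝ) (y : ℝ) : ℝ :=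
  sSup ((fun x => x * y - omegaM M (Real.exp x)) '' Set.Ici (0 : ℝ))

/-- The weight matrix associated with `ω_M`: `M^{(l)}_p := exp((1/l)·φ*(l·p))`. -/
noncomputable def MMat (M : ℕ → ℝ) (l : ℝ) (p : ℕ) : ℝ :=
  Real.exp ((1 / l) * phiStar M (l * p))

/-- `m^{(l)}_p := M^{(l)}_p / p!`. -/
noncomputable def mMat (M : ℕ → ℝ) (l : ℝ) (p : ℕ) : ℝ :=
  MMat M l p / (Nat.factorial p)

/-- The Roumieu root-almost-increasing condition `(M_{rai})` for the weight matrix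
associated with `ω_M`. -/
def MRai (M : ℕ → ℝ) : Prop :=
  ∀ x : ℝ, 0 < x → ∃ C : ℝ, 0 < C ∧ ∃ y : ℝ, 0 < y ∧
    ∀ p q : ℕ, 1 ≤ p → p ≤ q →
      (mMat M x p) ^ (1 / (p : ℝ)) ≤ C * (mMat M y q) ^ (1 / (q : ℝ))

/-- `M ≼ N` : `sup_{p ≥ 1} (M_p/N_p)^{1/p} < ∞`. -/
def Precsim (M N : ℕ → ℝ) : Prop :=
  ∃ A : ℝ, ∀ p : ℕ, 1 ≤ p → (M p / N p) ^ (1 / (p : ℝ)) ≤ A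

/-- `M ≈ N` : mutual `≼`. -/
def Approx (M N : ℕ → ℝ) : Prop := Precsim M N ∧ Precsim N M

/-- Condition `(ω1)` for a weight function. -/
def Omega1 (w : ℝ → ℝ) : Prop :=
  ∃ L : ℝ, 1 ≤ L ∧ ∀ t : ℝ, 0 ≤ t → w (2 * t) ≤ L * (w t + 1)

/-- Condition `(α0)` (in the rewritten form valid for all `t ≥ 0`). -/
def Alpha0 (w : ℝ → ℝ) : Prop :=
  ∃ C : ℝ, 1 ≤ C ∧ ∃ D : ℝ, 1 ≤ D ∧ ∀ lam : ℝ, 1 ≤ lam → ∀ t : ℝ, 0 ≤ t →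
    w (lam * t) ≤ C * lam * w t + D * lam


section stmt12aux

variable {M : ℕ → ℝ}

private lemma rootle {a b : ℝ} (ha : 0 < a) (hb : 0 < b) {p q : ℕ}
    (hp : 0 < p) (hq : 0 < q) (h : a ^ q ≤ b ^ p) :
    a ^ ((1 : ℝ) / p) ≤ b ^ ((1 : ℝ) / q) := by
  rw [Real.rpow_def_of_pos ha, Real.rpow_def_of_pos hb, Real.exp_le_exp]
  have hlog : (q : ℝ) * Real.log a ≤ (p : ℝ) * Real.log b := by
    have := Real.log_le_log (by positivity) h
    rwa [Real.log_pow, Real.log_pow] at this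
  have hp' : (0 : ℝ) < p := by exact_mod_cast hp
  have hq' : (0 : ℝ) < q := by exact_mod_cast hq
  rw [mul_one_div, mul_one_div, div_le_div_iff₀ hp' hq']
  nlinarith

private lemma root_le_of_le_pow {a b : ℝ} (ha : 0 ≤ a) (hb : 0 ≤ b) {n : ℕ}
    (hn : 0 < n) (h : a ≤ b ^ n) : a ^ ((1 : ℝ) / n) ≤ b := by
  have hn' : ((n : ℝ)) ≠ 0 := by positivity
  calc a ^ ((1 : ℝ) / n) ≤ (b ^ n) ^ ((1 : ℝ) / n) :=
        Real.rpow_le_rpow ha h (by positivity)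
    _ = b := by
        rw [← Real.rpow_natCast b n, ← Real.rpow_mul hb, mul_one_div,
          div_self hn', Real.rpow_one]

private lemma le_root_of_pow_le {a b : ℝ} (ha : 0 ≤ a) (hb : 0 ≤ b) {n : ℕ}
    (hn : 0 < n) (h : b ^ n ≤ a) : b ≤ a ^ ((1 : ℝ) / n) := by
  have hn' : ((n : ℝ)) ≠ 0 := by positivity
  calc b = (b ^ n) ^ ((1 : ℝ) / n) := by
        rw [← Real.rpow_natCast b n, ← Real.rpow_mul hb, mul_one_div,
          div_self hn', Real.rpow_one]
    _ ≤ a ^ ((1 : ℝ) / n) := Real.rpow_le_rpow (by positivity) h (by positivity)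

private lemma fact_root_le {n : ℕ} (hn : 1 ≤ n) :
    ((n.factorial : ℝ)) ^ ((1 : ℝ) / n) ≤ n := by
  apply root_le_of_le_pow (by positivity) (by positivity) hn
  exact_mod_cast Nat.factorial_le_pow n

private lemma fact_root_ge {n : ℕ} (hn : 1 ≤ n) :
    (n : ℝ) / Real.exp 1 ≤ ((n.factorial : ℝ)) ^ ((1 : ℝ) / n) := by
  apply le_root_of_pow_le (by positivity) (by positivity) hn
  rw [div_pow]
  rw [div_le_iff₀ (by positivity)]
  have h1 : ((n : ℝ)) ^ n / (n.factorial : ℝ) ≤ Real.exp n :=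
    Real.pow_div_factorial_le_exp (x := (n : ℝ)) (Nat.cast_nonneg n) n
  have h2 : Real.exp (n : ℝ) = Real.exp 1 ^ n := by
    rw [← Real.exp_nat_mul, mul_one]
  have hf : (0 : ℝ) < (n.factorial : ℝ) := by positivity
  rw [div_le_iff₀ hf] at h1
  calc ((n : ℝ)) ^ n ≤ Real.exp (n : ℝ) * (n.factorial : ℝ) := h1
    _ = (n.factorial : ℝ) * Real.exp 1 ^ n := by rw [h2]; ring

private lemma M_mono (hM : IsLC M) : Monotone M := by
  obtain ⟨hpos, h0, h01, hlc, -⟩ := hM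
  apply monotone_nat_of_le_succ
  intro p
  induction p with
  | zero => simpa using h01
  | succ n ih =>
    have hc := hlc (n + 1) (by omega)
    simp only [Nat.add_sub_cancel] at hc
    have h1 : M (n + 1) * M (n + 1) ≤ M (n + 1) * M (n + 2) := by
      calc M (n + 1) * M (n + 1) = M (n + 1) ^ 2 := by ring
        _ ≤ M n * M (n + 2) := hc
        _ ≤ M (n + 1) * M (n + 2) :=
            mul_le_mul_of_nonneg_right ih (hpos (n + 2)).le
    exact le_of_mul_le_mul_left h1 (hpos (n + 1))

private lemma one_le_M (hM : IsLC M) (p : ℕ) : 1 ≤ M p := by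
  have := M_mono hM (Nat.zero_le p)
  rwa [hM.2.1] at this

private lemma pow_succ_le (hM : IsLC M) : ∀ p : ℕ, M p ^ (p + 1) ≤ M (p + 1) ^ p := by
  obtain ⟨hpos, h0, h01, hlc, -⟩ := hM
  intro p
  induction p with
  | zero => simp [h0]
  | succ n ih =>
    have hc := hlc (n + 1) (by omega)
    simp only [Nat.add_sub_cancel] at hc
    have h1 : (M (n + 1) ^ 2) ^ (n + 1) ≤ (M n * M (n + 2)) ^ (n + 1) :=
      pow_le_pow_left₀ (by positivity) hc (n + 1)
    have h2 : M n ^ (n + 1) * M (n + 2) ^ (n + 1) ≤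
        M (n + 1) ^ n * M (n + 2) ^ (n + 1) :=
      mul_le_mul_of_nonneg_right ih (pow_nonneg (hpos _).le _)
    have h3 : M (n + 1) ^ n * M (n + 1) ^ (n + 2) ≤
        M (n + 1) ^ n * M (n + 2) ^ (n + 1) := by
      calc M (n + 1) ^ n * M (n + 1) ^ (n + 2) = (M (n + 1) ^ 2) ^ (n + 1) := by ring
        _ ≤ (M n * M (n + 2)) ^ (n + 1) := h1
        _ = M n ^ (n + 1) * M (n + 2) ^ (n + 1) := by rw [mul_pow]
        _ ≤ _ := h2
    exact le_of_mul_le_mul_left h3 (pow_pos (hpos _) _)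

private lemma root_mono (hM : IsLC M) {p q : ℕ} (hp : 1 ≤ p) (hpq : p ≤ q) :
    M p ^ ((1 : ℝ) / p) ≤ M q ^ ((1 : ℝ) / q) := by
  induction q, hpq using Nat.le_induction with
  | base => exact le_refl _
  | succ q hq ih =>
    refine ih.trans ?_
    exact rootle (hM.1 q) (hM.1 (q + 1)) (by omega) (by omega) (pow_succ_le hM q)

private lemma div_le_mul_div {a1 a2 b1 b2 K : ℝ} (ha1 : 0 ≤ a1) (hb1 : 0 < b1)
    (hb2 : 0 < b2) (hK : 0 ≤ K) (h1 : a1 ≤ a2) (h2 : b2 ≤ K * b1) :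
    a1 / b1 ≤ K * (a2 / b2) := by
  rw [← mul_div_assoc, div_le_div_iff₀ hb1 hb2]
  calc a1 * b2 ≤ a1 * (K * b1) := mul_le_mul_of_nonneg_left h2 ha1
    _ = K * a1 * b1 := by ring
    _ ≤ K * a2 * b1 := by
        apply mul_le_mul_of_nonneg_right _ hb1.le
        exact mul_le_mul_of_nonneg_left h1 hK

private lemma l_rpow_eq (hM : IsLC M) {C q : ℕ} (hC : 1 ≤ C) (hq : 1 ≤ q) :
    ((M (C * q)) ^ (1 / (C : ℝ)) / (Nat.factorial q : ℝ)) ^ ((1 : ℝ) / q) =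
      M (C * q) ^ ((1 : ℝ) / ((C * q : ℕ) : ℝ)) / ((Nat.factorial q : ℝ)) ^ ((1 : ℝ) / q) := by
  have hMpos := (hM.1 (C * q)).le
  rw [Real.div_rpow (by positivity) (by positivity), ← Real.rpow_mul hMpos]
  congr 2
  rw [Nat.cast_mul, div_mul_div_comm, one_mul]

end stmt12aux

/-- Lemma 4.3: the truncated condition for `m` is equivalent to the mixed
root-almost-increasing condition between `m` and `l^C`. -/
theorem stmt12 (M : ℕ → ℝ) (hM : IsLC M) :
    (∃ A : ℝ, 1 ≤ A ∧ ∃ C : ℕ, 1 ≤ C ∧ ∀ p q : ℕ, 1 ≤ p → C * p ≤ q →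
      (mseq M p) ^ (1 / (p : ℝ)) ≤ A * (mseq M q) ^ (1 / (q : ℝ))) ↔
    (∃ B : ℝ, 1 ≤ B ∧ ∃ C : ℕ, 1 ≤ C ∧ ∀ p q : ℕ, 1 ≤ p → p ≤ q →
      (mseq M p) ^ (1 / (p : ℝ)) ≤
        B * ((M (C * q)) ^ (1 / (C : ℝ)) / (Nat.factorial q)) ^ (1 / (q : ℝ))) := by
  have he1 : (1 : ℝ) ≤ Real.exp 1 := Real.one_le_exp (by norm_num)
  have hepos : (0 : ℝ) < Real.exp 1 := Real.exp_pos 1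
  constructor
  · rintro ⟨A, hA, C, hC, h⟩
    refine ⟨A * Real.exp 1, by nlinarith, C, hC, ?_⟩
    intro p q hp hq
    have hq1 : 1 ≤ q := hp.trans hq
    have hN1 : 1 ≤ C * q := Nat.one_le_iff_ne_zero.mpr (Nat.mul_ne_zero (by omega) (by omega))
    have key := h p (C * q) hp (Nat.mul_le_mul_left C hq)
    have hfq : (0 : ℝ) < ((Nat.factorial q : ℝ)) ^ ((1 : ℝ) / q) := by
      apply Real.rpow_pos_of_pos; positivity
    have hfN : (0 : ℝ) < ((Nat.factorial (C * q) : ℝ)) ^ ((1 : ℝ) / (C * q : ℕ)) := by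
      apply Real.rpow_pos_of_pos; positivity
    have hMpos : (0 : ℝ) < M (C * q) ^ ((1 : ℝ) / ((C * q : ℕ) : ℝ)) :=
      Real.rpow_pos_of_pos (hM.1 _) _
    have hstep : mseq M (C * q) ^ ((1 : ℝ) / ((C * q : ℕ) : ℝ)) ≤
        Real.exp 1 * ((M (C * q)) ^ (1 / (C : ℝ)) / (Nat.factorial q)) ^ (1 / (q : ℝ)) := by
      rw [l_rpow_eq hM hC hq1, mseq, Real.div_rpow (hM.1 _).le (by positivity)]
      apply div_le_mul_div hMpos.le hfN hfq hepos.le le_rfl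
      -- (q!)^(1/q) ≤ e * ((Cq)!)^(1/(Cq))
      calc ((Nat.factorial q : ℝ)) ^ ((1 : ℝ) / q) ≤ (q : ℝ) := fact_root_le hq1
        _ ≤ ((C * q : ℕ) : ℝ) := by exact_mod_cast Nat.le_mul_of_pos_left q (by omega)
        _ = Real.exp 1 * (((C * q : ℕ) : ℝ) / Real.exp 1) := by
            field_simp
        _ ≤ Real.exp 1 * ((Nat.factorial (C * q) : ℝ)) ^ ((1 : ℝ) / (C * q : ℕ)) :=
            mul_le_mul_of_nonneg_left (fact_root_ge hN1) hepos.le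
    calc mseq M p ^ (1 / (p : ℝ)) ≤ A * mseq M (C * q) ^ (1 / ((C * q : ℕ) : ℝ)) := key
      _ ≤ A * (Real.exp 1 *
            ((M (C * q)) ^ (1 / (C : ℝ)) / (Nat.factorial q)) ^ (1 / (q : ℝ))) := by
          apply mul_le_mul_of_nonneg_left _ (by linarith)
          exact hstep
      _ = A * Real.exp 1 *
            ((M (C * q)) ^ (1 / (C : ℝ)) / (Nat.factorial q)) ^ (1 / (q : ℝ)) := by ring
  · rintro ⟨B, hB, C, hC, h⟩
    have hCpos : 0 < C := hC
    have hC' : (1 : ℝ) ≤ (C : ℝ) := by exact_mod_cast hC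
    have h2Ce : (1 : ℝ) ≤ 2 * (C : ℝ) * Real.exp 1 := by nlinarith
    refine ⟨B * (2 * C * Real.exp 1), by nlinarith [mul_nonneg (sub_nonneg.mpr hB) (sub_nonneg.mpr h2Ce)], C, hC, ?_⟩
    intro p q hp hq
    set r := q / C with hr
    have hpr : p ≤ r := (Nat.le_div_iff_mul_le hCpos).mpr (by rw [mul_comm]; exact hq)
    have hr1 : 1 ≤ r := hp.trans hpr
    have hq1 : 1 ≤ q := by
      calc 1 ≤ C * p := Nat.one_le_iff_ne_zero.mpr (Nat.mul_ne_zero (by omega) (by omega))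
        _ ≤ q := hq
    have hCrq : C * r ≤ q := by
      rw [hr, mul_comm]; exact Nat.div_mul_le_self q C
    have hq2Cr : q ≤ 2 * (C * r) := by
      have h1 : q < C * r + C := by
        rw [hr]
        have h2 := Nat.div_add_mod q C
        have h3 := Nat.mod_lt q hCpos
        omega
      have : C ≤ C * r := Nat.le_mul_of_pos_right C (by omega)
      omega
    have hCr1 : 1 ≤ C * r := Nat.one_le_iff_ne_zero.mpr (Nat.mul_ne_zero (by omega) (by omega))
    have key := h p r hp hpr
    have hfq : (0 : ℝ) < ((Nat.factorial q : ℝ)) ^ ((1 : ℝ) / q) := by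
      apply Real.rpow_pos_of_pos; positivity
    have hfr : (0 : ℝ) < ((Nat.factorial r : ℝ)) ^ ((1 : ℝ) / r) := by
      apply Real.rpow_pos_of_pos; positivity
    have hstep : ((M (C * r)) ^ (1 / (C : ℝ)) / (Nat.factorial r)) ^ (1 / (r : ℝ)) ≤
        (2 * C * Real.exp 1) * mseq M q ^ ((1 : ℝ) / q) := by
      rw [l_rpow_eq hM hC hr1, mseq, Real.div_rpow (hM.1 _).le (by positivity)]
      apply div_le_mul_div (Real.rpow_pos_of_pos (hM.1 _) _).le hfr hfq
        (by positivity) (root_mono hM hCr1 hCrq)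
      -- (q!)^(1/q) ≤ (2 C e) * (r!)^(1/r)
      have hrE : (r : ℝ) / Real.exp 1 ≤ ((Nat.factorial r : ℝ)) ^ ((1 : ℝ) / r) :=
        fact_root_ge hr1
      calc ((Nat.factorial q : ℝ)) ^ ((1 : ℝ) / q) ≤ (q : ℝ) := fact_root_le hq1
        _ ≤ 2 * (C : ℝ) * (r : ℝ) := by exact_mod_cast hq2Cr.trans_eq (by ring)
        _ = (2 * C * Real.exp 1) * ((r : ℝ) / Real.exp 1) := by
            field_simp
        _ ≤ (2 * C * Real.exp 1) * ((Nat.factorial r : ℝ)) ^ ((1 : ℝ) / r) := by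
            apply mul_le_mul_of_nonneg_left hrE (by positivity)
    calc mseq M p ^ (1 / (p : ℝ)) ≤
          B * ((M (C * r)) ^ (1 / (C : ℝ)) / (Nat.factorial r)) ^ (1 / (r : ℝ)) := key
      _ ≤ B * ((2 * C * Real.exp 1) * mseq M q ^ ((1 : ℝ) / q)) :=
          mul_le_mul_of_nonneg_left hstep (by linarith)
      _ = B * (2 * C * Real.exp 1) * mseq M q ^ (1 / (q : ℝ)) := by ring
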